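/- arXiv:1607.07521 — 3 statements merged into one kernel-verified Lean document; each statement's English description precedes it below -/
import Mathlib

section
/- If the weights α_{ij} satisfy the covariate calibration constraints Σ_{i,j} ω_{ij} A_{ij} α_{ij} X_{ij} = Σ_{i,j} ω_{ij} X_{ij} and Σ_{i,j} ω_{ij} (1−A_{ij}) α_{ij} X_{ij} = Σ_{i,j} ω_{ij} X_{ij}, and per-cluster constraints Σ_j ω_{ij} A_{ij} α_{ij} = Σ_j ω_{ij} and Σ_j ω_{ij}(1−A_{ij}) α_{ij} = Σ_j ω_{ij} for each i, then the augmented inverse probability weighting estimator with outcome model X_{ij}β_a + U_i coincides with the plain inverse probability weighting estimator: τ̂_AIPTW = τ̂_IPTW, for any β_0, β_1 and any cluster effects U_i. -/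
lemma stmt3_aux {K : ℕ} {n : Fin K → ℕ} {p : ℕ}
    (w c : (i : Fin K) → Fin (n i) → ℝ)
    (X : (i : Fin K) → Fin (n i) → Fin p → ℝ)
    (β : Fin p → ℝ) (U : Fin K → ℝ)
    (h1 : ∑ i, ∑ j, (c i j) • X i j = ∑ i, ∑ j, (w i j) • X i j)
    (h2 : ∀ i, ∑ j, c i j = ∑ j, w i j) :
    ∑ i, ∑ j, (c i j - w i j) * ((∑ k, X i j k * β k) + U i) = 0 := by
  have h1' : ∀ k, ∑ i, ∑ j, c i j * X i j k = ∑ i, ∑ j, w i j * X i j k := by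
    intro k
    have := congrFun h1 k
    simpa [Finset.sum_apply] using this
  calc ∑ i, ∑ j, (c i j - w i j) * ((∑ k, X i j k * β k) + U i)
      = ∑ i, ∑ j, ((∑ k, (c i j * X i j k - w i j * X i j k) * β k)
          + (c i j - w i j) * U i) := by
        refine Finset.sum_congr rfl fun i _ => Finset.sum_congr rfl fun j _ => ?_
        rw [mul_add, Finset.mul_sum]
        congr 1
        refine Finset.sum_congr rfl fun k _ => by ring
    _ = (∑ i, ∑ j, ∑ k, (c i j * X i j k - w i j * X i j k) * β k)
          + ∑ i, ∑ j, (c i j - w i j) * U i := by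
        rw [← Finset.sum_add_distrib]
        exact Finset.sum_congr rfl fun i _ => by rw [Finset.sum_add_distrib]
    _ = 0 := by
        have hA : (∑ i, ∑ j, ∑ k, (c i j * X i j k - w i j * X i j k) * β k) = 0 := by
          have hstep : ∀ i : Fin K, ∑ j, ∑ k, (c i j * X i j k - w i j * X i j k) * β k
              = ∑ k, (∑ j, (c i j * X i j k - w i j * X i j k)) * β k := by
            intro i
            rw [Finset.sum_comm]
            exact Finset.sum_congr rfl fun k _ => (Finset.sum_mul _ _ _).symm
          rw [Finset.sum_congr rfl fun i _ => hstep i, Finset.sum_comm]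
          rw [show (0:ℝ) = ∑ _k : Fin p, (0:ℝ) by simp]
          refine Finset.sum_congr rfl fun k _ => ?_
          rw [← Finset.sum_mul]
          have hz : ∑ i, ∑ j, (c i j * X i j k - w i j * X i j k) = 0 := by
            simp [Finset.sum_sub_distrib, h1' k]
          rw [hz, zero_mul]
        have hB : ∑ i, ∑ j, (c i j - w i j) * U i = 0 := by
          have hz : ∀ i : Fin K, ∑ j, (c i j - w i j) * U i = 0 := by
            intro i
            rw [← Finset.sum_mul]
            simp [Finset.sum_sub_distrib, h2 i]
          simp [hz]
        rw [hA, hB, add_zero]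

/-- under the covariate and per-cluster calibration constraints,
the AIPTW estimator with linear-mixed outcome model coincides with the IPTW estimator. -/
theorem stmt3 (K : ℕ) (n : Fin K → ℕ) (p : ℕ)
    (w : (i : Fin K) → Fin (n i) → ℝ)
    (A : (i : Fin K) → Fin (n i) → ℝ)
    (X : (i : Fin K) → Fin (n i) → Fin p → ℝ)
    (Y : (i : Fin K) → Fin (n i) → ℝ)
    (ehat : (i : Fin K) → Fin (n i) → ℝ)
    (β₀ β₁ : Fin p → ℝ) (U : Fin K → ℝ)
    (hw : ∀ i j, 0 < w i j)
    (hA : ∀ i j, A i j = 0 ∨ A i j = 1)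
    (he : ∀ i j, 0 < ehat i j ∧ ehat i j < 1)
    (α : (i : Fin K) → Fin (n i) → ℝ)
    (hα : ∀ i j, α i j = A i j / ehat i j + (1 - A i j) / (1 - ehat i j))
    -- covariate calibration constraints
    (hc1 : ∑ i, ∑ j, (w i j * A i j * α i j) • X i j = ∑ i, ∑ j, (w i j) • X i j)
    (hc2 : ∑ i, ∑ j, (w i j * (1 - A i j) * α i j) • X i j = ∑ i, ∑ j, (w i j) • X i j)
    -- per-cluster calibration constraints
    (hc3 : ∀ i, ∑ j, w i j * A i j * α i j = ∑ j, w i j)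
    (hc4 : ∀ i, ∑ j, w i j * (1 - A i j) * α i j = ∑ j, w i j) :
    -- τ̂_AIPTW = τ̂_IPTW
    (∑ i, ∑ j, w i j)⁻¹ *
        (∑ i, ∑ j, w i j * (A i j * Y i j / ehat i j
            - (1 - A i j) * Y i j / (1 - ehat i j)))
      - (∑ i, ∑ j, w i j)⁻¹ *
        (∑ i, ∑ j, w i j * ((A i j - ehat i j) / ehat i j)
            * ((∑ k, X i j k * β₁ k) + U i))
      - (∑ i, ∑ j, w i j)⁻¹ *
        (∑ i, ∑ j, w i j * ((A i j - ehat i j) / (1 - ehat i j))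
            * ((∑ k, X i j k * β₀ k) + U i))
    = (∑ i, ∑ j, w i j)⁻¹ *
        (∑ i, ∑ j, w i j * (A i j * Y i j / ehat i j
            - (1 - A i j) * Y i j / (1 - ehat i j))) := by
  have key1 : ∀ i j, w i j * ((A i j - ehat i j) / ehat i j)
      = w i j * A i j * α i j - w i j := by
    intro i j
    have he0 := (he i j).1
    have he1 := (he i j).2
    have hne : ehat i j ≠ 0 := ne_of_gt he0
    have hne1 : (1 - ehat i j) ≠ 0 := by intro h; linarith [he1]
    rcases hA i j with h | h <;> rw [hα i j, h] <;> field_simp <;> ring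
  have key2 : ∀ i j, w i j * ((A i j - ehat i j) / (1 - ehat i j))
      = -(w i j * (1 - A i j) * α i j - w i j) := by
    intro i j
    have he0 := (he i j).1
    have he1 := (he i j).2
    have hne : ehat i j ≠ 0 := ne_of_gt he0
    have hne1 : (1 - ehat i j) ≠ 0 := by intro h; linarith [he1]
    rcases hA i j with h | h <;> rw [hα i j, h] <;> field_simp <;> ring
  have T1 : ∑ i, ∑ j, w i j * ((A i j - ehat i j) / ehat i j)
      * ((∑ k, X i j k * β₁ k) + U i) = 0 := by
    have := stmt3_aux w (fun i j => w i j * A i j * α i j) X β₁ U hc1 hc3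
    rw [← this]
    exact Finset.sum_congr rfl fun i _ => Finset.sum_congr rfl fun j _ => by
      rw [key1 i j]
  have T2 : ∑ i, ∑ j, w i j * ((A i j - ehat i j) / (1 - ehat i j))
      * ((∑ k, X i j k * β₀ k) + U i) = 0 := by
    have h0 := stmt3_aux w (fun i j => w i j * (1 - A i j) * α i j) X β₀ U hc2 hc4
    have : ∑ i, ∑ j, w i j * ((A i j - ehat i j) / (1 - ehat i j))
        * ((∑ k, X i j k * β₀ k) + U i)
        = -∑ i, ∑ j, (w i j * (1 - A i j) * α i j - w i j)
            * ((∑ k, X i j k * β₀ k) + U i) := by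
      rw [← Finset.sum_neg_distrib]
      refine Finset.sum_congr rfl fun i _ => ?_
      rw [← Finset.sum_neg_distrib]
      refine Finset.sum_congr rfl fun j _ => ?_
      rw [key2 i j]; ring
    rw [this, h0, neg_zero]
  rw [T1, T2]
  ring
end

section
/- Let q₁(X,U) = E[A/ê(X,U) − 1 | X, U] where ê is any measurable function of (X,U) bounded in (ε, 1−ε). Suppose X and U are independent, and Y(1) satisfies Y(1) ⟂ A | (X,U). Define μ₁(U) = E[q₁(X,U)·m(X,U)] / E[q₁(X,U)] conditional on U (integrating over the marginal law of X), where m(X,U) = E[Y(1)|X,U], assuming E[q₁(X,U)|U] ≠ 0 a.s. Then E[ (A/ê(X,U) − 1)(Y(1) − μ₁(U)) ] = 0. -/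
open MeasureTheory ProbabilityTheory

/-- Abstract induction lemma: if `w` is a.e.-bounded and has vanishing set-integral on every
`m`-measurable set, then `∫ h * w = 0` for every `h` integrable w.r.t. the trimmed measure. -/
lemma integral_mul_eq_zero_of_forall_setIntegral_eq_zero
    {α : Type*} {m m0 : MeasurableSpace α} (hm : m ≤ m0) (μ : Measure α)
    [IsFiniteMeasure μ] (w : α → ℝ) (hw_meas : AEStronglyMeasurable w μ)
    {C : ℝ} (hC0 : 0 ≤ C) (hw_bdd : ∀ᵐ x ∂μ, ‖w x‖ ≤ C)
    (hind : ∀ t, MeasurableSet[m] t → ∫ x in t, w x ∂μ = 0) :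
    ∀ h : α → ℝ, Integrable h (μ.trim hm) → ∫ x, h x * w x ∂μ = 0 := by
  have hwint : Integrable w μ :=
    ⟨hw_meas, (hasFiniteIntegral_def _ _).2 (HasFiniteIntegral.mono' (integrable_const C).2 hw_bdd)⟩
  have hmul_int : ∀ h : α → ℝ, Integrable h μ → Integrable (fun x => h x * w x) μ := by
    intro h hh
    exact (hh.bdd_mul hw_meas hw_bdd).congr (ae_of_all _ fun x => mul_comm _ _)
  intro h hh
  refine @Integrable.induction α ℝ m _ (μ.trim hm)
    (fun h => ∫ x, h x * w x ∂μ = 0) ?_ ?_ ?_ ?_ h hh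
  · -- indicator case
    intro c s hs _
    have h1 : (fun x => Set.indicator s (fun _ => c) x * w x)
        = Set.indicator s (fun x => c * w x) := by
      funext x; by_cases hx : x ∈ s <;> simp [hx]
    rw [h1, integral_indicator (hm _ hs), integral_const_mul, hind s hs, mul_zero]
  · -- additivity
    intro h1 h2 _ hi1 hi2 p1 p2
    have hi1' : Integrable h1 μ := integrable_of_integrable_trim hm hi1
    have hi2' : Integrable h2 μ := integrable_of_integrable_trim hm hi2
    have : ∫ x, (h1 + h2) x * w x ∂μ
        = ∫ x, h1 x * w x ∂μ + ∫ x, h2 x * w x ∂μ := by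
      rw [← integral_add (hmul_int h1 hi1') (hmul_int h2 hi2')]
      congr 1; funext x; simp [add_mul]
    rw [this, p1, p2, add_zero]
  · -- closedness in L¹ of the trimmed measure
    have hlip : LipschitzWith (Real.nnabs C) (fun h : Lp ℝ 1 (μ.trim hm) => ∫ x, h x * w x ∂μ) := by
      refine LipschitzWith.of_dist_le_mul fun h1 h2 => ?_
      have hi1 : Integrable (⇑h1) μ := integrable_of_integrable_trim hm (L1.integrable_coeFn h1)
      have hi2 : Integrable (⇑h2) μ := integrable_of_integrable_trim hm (L1.integrable_coeFn h2)
      have hd : dist (∫ x, h1 x * w x ∂μ) (∫ x, h2 x * w x ∂μ)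
          = |∫ x, (h1 x - h2 x) * w x ∂μ| := by
        rw [Real.dist_eq]
        congr 1
        rw [← integral_sub (hmul_int _ hi1) (hmul_int _ hi2)]
        congr 1; funext x; ring
      have hint : Integrable (fun x => (h1 x - h2 x) * w x) μ := hmul_int _ (hi1.sub hi2)
      have hb1 : |∫ x, (h1 x - h2 x) * w x ∂μ| ≤ C * ∫ x, |h1 x - h2 x| ∂μ := by
        calc |∫ x, (h1 x - h2 x) * w x ∂μ|
            ≤ ∫ x, |(h1 x - h2 x) * w x| ∂μ := by
              have := norm_integral_le_integral_norm
                (fun x => (h1 x - h2 x) * w x) (μ := μ)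
              simpa only [Real.norm_eq_abs] using this
          _ ≤ ∫ x, |h1 x - h2 x| * C ∂μ := by
              refine integral_mono_ae hint.abs ((hi1.sub hi2).abs.mul_const C) ?_
              filter_upwards [hw_bdd] with x hb
              rw [abs_mul]
              exact mul_le_mul_of_nonneg_left (by simpa [Real.norm_eq_abs] using hb) (abs_nonneg _)
          _ = C * ∫ x, |h1 x - h2 x| ∂μ := by rw [integral_mul_const]; ring
      have hdist : dist h1 h2 = ∫ x, |h1 x - h2 x| ∂μ := by
        rw [L1.dist_eq_integral_dist]
        have hmeas : AEStronglyMeasurable[m] (fun x => dist (h1 x) (h2 x)) (μ.trim hm) :=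
          (Lp.aestronglyMeasurable h1).dist (Lp.aestronglyMeasurable h2)
        rw [← integral_trim_ae hm hmeas]
        simp_rw [Real.dist_eq]
      rw [hd, hdist]
      calc |∫ x, (h1 x - h2 x) * w x ∂μ| ≤ C * ∫ x, |h1 x - h2 x| ∂μ := hb1
        _ = ↑(Real.nnabs C) * ∫ x, |h1 x - h2 x| ∂μ := by
            rw [Real.coe_nnabs, abs_of_nonneg hC0]
    exact isClosed_eq hlip.continuous continuous_const
  · -- a.e. congruence
    intro h1 h2 hae hi1 p1
    have hae' : h1 =ᵐ[μ] h2 := ae_eq_of_ae_eq_trim hae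
    have : (fun x => h2 x * w x) =ᵐ[μ] fun x => h1 x * w x := by
      filter_upwards [hae'] with x hx; rw [hx]
    rw [integral_congr_ae this]
    exact p1

/-- Product rule for conditional expectation under conditional independence,
where one factor is `{0,1}`-valued. -/
lemma condexp_mul_of_condIndepFun' {Ω : Type*} {m' : MeasurableSpace Ω}
    [mΩ : MeasurableSpace Ω] [StandardBorelSpace Ω]
    {μ : Measure Ω} [IsProbabilityMeasure μ]
    (hm' : m' ≤ mΩ) {f g : Ω → ℝ}
    (hf : Measurable[mΩ] f) (hg : Measurable[mΩ] g) (hfi : Integrable f μ)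
    (hg01 : ∀ ω, g ω = 0 ∨ g ω = 1)
    (hci : CondIndepFun m' hm' f g μ) :
    μ[fun ω => f ω * g ω|m'] =ᵐ[μ] fun ω => (μ[f|m']) ω * (μ[g|m']) ω := by
  haveI : SigmaFinite (μ.trim hm') := by
    have : IsFiniteMeasure (μ.trim hm') := isFiniteMeasure_trim hm'
    infer_instance
  -- boundedness facts about g and its conditional expectation
  have hgb : ∀ ω, ‖g ω‖ ≤ 1 := by
    intro ω; rcases hg01 ω with h | h <;> simp [h]
  have hgi : Integrable g μ :=
    (integrable_const (1:ℝ)).mono' (hg.aestronglyMeasurable (μ := μ)) (ae_of_all _ hgb)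
  have hcg0 : 0 ≤ᵐ[μ] μ[g|m'] :=
    condExp_nonneg (ae_of_all _ fun ω => by rcases hg01 ω with h | h <;> simp [h])
  have hcg1 : μ[g|m'] ≤ᵐ[μ] fun _ => (1:ℝ) := by
    have h := condExp_mono (μ := μ) (m := m') hgi (integrable_const (1:ℝ))
      (ae_of_all _ fun ω => by rcases hg01 ω with h | h <;> simp [h])
    calc μ[g|m'] ≤ᵐ[μ] μ[(fun _ => (1:ℝ))|m'] := h
    _ = fun _ => (1:ℝ) := condExp_const hm' 1
  have hcgb : ∀ᵐ ω ∂μ, ‖(μ[g|m']) ω‖ ≤ 1 := by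
    filter_upwards [hcg0, hcg1] with ω h0 h1
    simp only [Pi.zero_apply] at h0
    rw [Real.norm_eq_abs, abs_le]; exact ⟨by linarith, h1⟩
  have hcgmeas : AEStronglyMeasurable (μ[g|m']) μ :=
    (stronglyMeasurable_condExp.mono hm').aestronglyMeasurable
  -- the set B where g = 1
  have hB : MeasurableSet[mΩ] (g ⁻¹' {1}) := hg (measurableSet_singleton 1)
  have hgB : g = Set.indicator (g ⁻¹' {1}) (fun _ => (1:ℝ)) := by
    funext ω
    rcases hg01 ω with h | h
    · have hω : ω ∉ g ⁻¹' {1} := by simp [h]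
      simp [Set.indicator_of_notMem hω, h]
    · have hω : ω ∈ g ⁻¹' {1} := by simp [h]
      simp [Set.indicator_of_mem hω, h]
  have hcgB : μ[g|m'] = μ⟦g ⁻¹' {1}|m'⟧ := by rw [← hgB]
  -- integrability of useful products
  have hfg_int : Integrable (fun ω => f ω * g ω) μ :=
    (hfi.bdd_mul (hg.aestronglyMeasurable (μ := μ)) (ae_of_all _ hgb)).congr
      (ae_of_all _ fun ω => mul_comm _ _)
  have hfcg_int : Integrable (fun ω => (μ[g|m']) ω * f ω) μ :=
    hfi.bdd_mul hcgmeas hcgb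
  have hcfcg_int : Integrable (fun ω => (μ[f|m']) ω * (μ[g|m']) ω) μ :=
    ((integrable_condExp (f := f)).bdd_mul hcgmeas hcgb).congr
      (ae_of_all _ fun ω => mul_comm _ _)
  -- the key vanishing set-integral property
  have key : ∀ s, MeasurableSet[m'] s →
      ∫ ω in s, f ω * (g ω - (μ[g|m']) ω) ∂μ = 0 := by
    intro s hs
    have hmfle : MeasurableSpace.comap f inferInstance ≤ mΩ := hf.comap_le
    -- the weight
    have hvmeas : AEStronglyMeasurable (fun ω => g ω - (μ[g|m']) ω) μ :=
      (hg.aestronglyMeasurable (μ := μ)).sub hcgmeas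
    have hsmeas : MeasurableSet[mΩ] s := hm' s hs
    have hwmeas : AEStronglyMeasurable
        (Set.indicator s (fun ω => g ω - (μ[g|m']) ω)) μ :=
      hvmeas.indicator hsmeas
    have hwbdd : ∀ᵐ ω ∂μ, ‖Set.indicator s (fun ω => g ω - (μ[g|m']) ω) ω‖ ≤ 2 := by
      filter_upwards [hcgb] with ω h1
      by_cases hω : ω ∈ s
      · rw [Set.indicator_of_mem hω]
        calc ‖g ω - (μ[g|m']) ω‖ ≤ ‖g ω‖ + ‖(μ[g|m']) ω‖ := norm_sub_le _ _
          _ ≤ 1 + 1 := add_le_add (hgb ω) h1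
          _ = 2 := by norm_num
      · rw [Set.indicator_of_notMem hω]; simp
    -- vanishing on σ(f)-measurable sets
    have hind : ∀ t, MeasurableSet[MeasurableSpace.comap f inferInstance] t →
        ∫ ω in t, Set.indicator s (fun ω => g ω - (μ[g|m']) ω) ω ∂μ = 0 := by
      rintro t ⟨t', ht', rfl⟩
      have htmeas : MeasurableSet[mΩ] (f ⁻¹' t') := hf ht'
      rw [setIntegral_indicator hsmeas]
      -- split into two integrals
      have hsub : ∫ ω in f ⁻¹' t' ∩ s, (g ω - (μ[g|m']) ω) ∂μ
          = ∫ ω in f ⁻¹' t' ∩ s, g ω ∂μ - ∫ ω in f ⁻¹' t' ∩ s, (μ[g|m']) ω ∂μ :=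
        integral_sub hgi.integrableOn integrable_condExp.integrableOn
      rw [hsub]
      -- conditional independence product
      have hprod := (condIndepFun_iff_condExp_inter_preimage_eq_mul
        (μ := μ) (hm' := hm') hf hg).mp hci t' {1} ht' (measurableSet_singleton 1)
      -- claim 1
      have hintind : Integrable (Set.indicator (f ⁻¹' t' ∩ g ⁻¹' {1}) (fun _ => (1:ℝ))) μ :=
        (integrable_const (1:ℝ)).indicator (htmeas.inter hB)
      have claim1 : ∫ ω in f ⁻¹' t' ∩ s, g ω ∂μ
          = ∫ ω in s, (μ⟦f ⁻¹' t'|m'⟧) ω * (μ⟦g ⁻¹' {1}|m'⟧) ω ∂μ := by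
        calc ∫ ω in f ⁻¹' t' ∩ s, g ω ∂μ
            = ∫ ω in f ⁻¹' t' ∩ s, Set.indicator (g ⁻¹' {1}) (fun _ => (1:ℝ)) ω ∂μ := by
              rw [← hgB]
          _ = ∫ ω in (f ⁻¹' t' ∩ s) ∩ g ⁻¹' {1}, (1:ℝ) ∂μ := setIntegral_indicator hB
          _ = ∫ ω in s ∩ (f ⁻¹' t' ∩ g ⁻¹' {1}), (1:ℝ) ∂μ := by
              rw [show (f ⁻¹' t' ∩ s) ∩ g ⁻¹' {1} = s ∩ (f ⁻¹' t' ∩ g ⁻¹' {1}) from by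
                ext ω; simp [Set.mem_inter_iff]; tauto]
          _ = ∫ ω in s, Set.indicator (f ⁻¹' t' ∩ g ⁻¹' {1}) (fun _ => (1:ℝ)) ω ∂μ :=
              (setIntegral_indicator (htmeas.inter hB)).symm
          _ = ∫ ω in s, (μ⟦f ⁻¹' t' ∩ g ⁻¹' {1}|m'⟧) ω ∂μ :=
              (setIntegral_condExp hm' hintind hs).symm
          _ = ∫ ω in s, (μ⟦f ⁻¹' t'|m'⟧) ω * (μ⟦g ⁻¹' {1}|m'⟧) ω ∂μ :=
              integral_congr_ae (ae_restrict_of_ae hprod)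
      -- claim 2
      have hIint : Integrable (Set.indicator (f ⁻¹' t') (fun _ => (1:ℝ))) μ :=
        (integrable_const (1:ℝ)).indicator htmeas
      have hIb : ∀ ω, ‖Set.indicator (f ⁻¹' t') (fun _ => (1:ℝ)) ω‖ ≤ 1 := by
        intro ω; by_cases hω : ω ∈ f ⁻¹' t' <;> simp [hω]
      have hcgI_int : Integrable
          (fun ω => (μ[g|m']) ω * Set.indicator (f ⁻¹' t') (fun _ => (1:ℝ)) ω) μ :=
        hIint.bdd_mul hcgmeas hcgb
      have hpull : μ[fun ω => (μ[g|m']) ω * Set.indicator (f ⁻¹' t') (fun _ => (1:ℝ)) ω|m']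
          =ᵐ[μ] fun ω => (μ[g|m']) ω
            * (μ⟦f ⁻¹' t'|m'⟧) ω := by
        have h := condExp_mul_of_stronglyMeasurable_left (μ := μ) (m := m')
          (stronglyMeasurable_condExp (f := g))
          (g := Set.indicator (f ⁻¹' t') (fun _ => (1:ℝ))) hcgI_int hIint
        exact h
      have claim2 : ∫ ω in f ⁻¹' t' ∩ s, (μ[g|m']) ω ∂μ
          = ∫ ω in s, (μ⟦f ⁻¹' t'|m'⟧) ω * (μ⟦g ⁻¹' {1}|m'⟧) ω ∂μ := by
        calc ∫ ω in f ⁻¹' t' ∩ s, (μ[g|m']) ω ∂μ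
            = ∫ ω in s ∩ f ⁻¹' t', (μ[g|m']) ω ∂μ := by rw [Set.inter_comm]
          _ = ∫ ω in s, Set.indicator (f ⁻¹' t') (fun ω => (μ[g|m']) ω) ω ∂μ :=
              (setIntegral_indicator htmeas).symm
          _ = ∫ ω in s, (μ[g|m']) ω * Set.indicator (f ⁻¹' t') (fun _ => (1:ℝ)) ω ∂μ := by
              refine integral_congr_ae (ae_of_all _ fun ω => ?_)
              by_cases hω : ω ∈ f ⁻¹' t' <;> simp [hω]
          _ = ∫ ω in s, (μ[fun ω => (μ[g|m']) ω
                * Set.indicator (f ⁻¹' t') (fun _ => (1:ℝ)) ω|m']) ω ∂μ :=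
              (setIntegral_condExp hm' hcgI_int hs).symm
          _ = ∫ ω in s, (μ[g|m']) ω * (μ⟦f ⁻¹' t'|m'⟧) ω ∂μ :=
              integral_congr_ae (ae_restrict_of_ae hpull)
          _ = ∫ ω in s, (μ⟦f ⁻¹' t'|m'⟧) ω * (μ⟦g ⁻¹' {1}|m'⟧) ω ∂μ := by
              rw [hcgB]; simp_rw [mul_comm]
      rw [claim1, claim2, sub_self]
    -- f is integrable w.r.t. the trim along σ(f)
    have hftrim : Integrable f (μ.trim hmfle) :=
      hfi.trim hmfle (Measurable.stronglyMeasurable (measurable_iff_comap_le.2 le_rfl))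
    have := integral_mul_eq_zero_of_forall_setIntegral_eq_zero hmfle μ
      (Set.indicator s (fun ω => g ω - (μ[g|m']) ω)) hwmeas (by norm_num : (0:ℝ) ≤ 2)
      hwbdd hind f hftrim
    calc ∫ ω in s, f ω * (g ω - (μ[g|m']) ω) ∂μ
        = ∫ ω, Set.indicator s (fun ω => f ω * (g ω - (μ[g|m']) ω)) ω ∂μ :=
          (integral_indicator hsmeas).symm
      _ = ∫ ω, f ω * Set.indicator s (fun ω => g ω - (μ[g|m']) ω) ω ∂μ := by
          refine integral_congr_ae (ae_of_all _ fun ω => ?_)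
          by_cases hω : ω ∈ s <;> simp [hω]
      _ = 0 := this
  -- conclude via the characterization of conditional expectation
  refine (ae_eq_condExp_of_forall_setIntegral_eq hm' hfg_int
    (fun t _ _ => hcfcg_int.integrableOn) (fun t ht _ => ?_)
    ((stronglyMeasurable_condExp.mul stronglyMeasurable_condExp).aestronglyMeasurable)).symm
  -- set-integral equality
  have hpull : μ[fun ω => (μ[g|m']) ω * f ω|m']
      =ᵐ[μ] fun ω => (μ[g|m']) ω * (μ[f|m']) ω := by
    have h := condExp_mul_of_stronglyMeasurable_left (μ := μ) (m := m')
      (stronglyMeasurable_condExp (f := g)) (g := f) hfcg_int hfi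
    exact h
  have hsplit : ∫ ω in t, f ω * g ω ∂μ
      = ∫ ω in t, f ω * (g ω - (μ[g|m']) ω) ∂μ + ∫ ω in t, f ω * (μ[g|m']) ω ∂μ := by
    rw [← integral_add]
    · refine integral_congr_ae (ae_of_all _ fun ω => ?_); ring
    · exact ((hfi.bdd_mul hcgmeas hcgb).congr
        (ae_of_all _ fun ω => mul_comm _ _) |>.sub hfg_int |>.neg.congr
        (ae_of_all _ fun ω => by
          simp only [Pi.neg_apply, Pi.sub_apply]; ring)).integrableOn
    · exact (hfcg_int.congr (ae_of_all _ fun ω => mul_comm _ _)).integrableOn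
  calc ∫ ω in t, (μ[f|m']) ω * (μ[g|m']) ω ∂μ
      = ∫ ω in t, (μ[g|m']) ω * (μ[f|m']) ω ∂μ := by simp_rw [mul_comm]
    _ = ∫ ω in t, (μ[fun ω => (μ[g|m']) ω * f ω|m']) ω ∂μ :=
        (integral_congr_ae (ae_restrict_of_ae hpull)).symm
    _ = ∫ ω in t, (μ[g|m']) ω * f ω ∂μ := setIntegral_condExp hm' hfcg_int ht
    _ = ∫ ω in t, f ω * (μ[g|m']) ω ∂μ := by simp_rw [mul_comm]
    _ = ∫ ω in t, f ω * g ω ∂μ := by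
        rw [hsplit, key t ht, zero_add]

theorem stmt8_aux {Ω : Type*} {m' : MeasurableSpace Ω}
    [mΩ : MeasurableSpace Ω] [StandardBorelSpace Ω] [Nonempty Ω]
    {μ : Measure Ω} [IsProbabilityMeasure μ]
    (A X U Y1 : Ω → ℝ)
    (eh prob mreg : ℝ × ℝ → ℝ)
    (hAmeas : Measurable A) (hXmeas : Measurable X) (hUmeas : Measurable U)
    (hY1meas : Measurable Y1) (hehmeas : Measurable eh)
    (hpmeas : Measurable prob) (hmmeas : Measurable mreg)
    (hA01 : ∀ ω, A ω = 0 ∨ A ω = 1)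
    (hY1int : Integrable Y1 μ)
    (ε : ℝ) (hε : 0 < ε) (hε' : ε < 1/2)
    (heb : ∀ x u, ε ≤ eh (x, u) ∧ eh (x, u) ≤ 1 - ε)
    (hm : m' ≤ mΩ)
    (hcomp : ∀ v : ℝ × ℝ → ℝ, Measurable v → Measurable[m'] (fun ω => v (X ω, U ω)))
    (hXU : IndepFun X U μ)
    (hci : CondIndepFun m' hm Y1 A μ)
    (hp : (fun ω => prob (X ω, U ω)) =ᵐ[μ] μ[A | m'])
    (hmr : (fun ω => mreg (X ω, U ω)) =ᵐ[μ] μ[Y1 | m'])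
    (q1 : ℝ × ℝ → ℝ)
    (hq1 : ∀ x u, q1 (x, u) = prob (x, u) / eh (x, u) - 1)
    (μ1 : ℝ → ℝ)
    (hμ1 : ∀ u, μ1 u =
      (∫ x, q1 (x, u) * mreg (x, u) ∂(Measure.map X μ)) /
      (∫ x, q1 (x, u) ∂(Measure.map X μ)))
    (hden : ∀ᵐ u ∂(Measure.map U μ), (∫ x, q1 (x, u) ∂(Measure.map X μ)) ≠ 0) :
    ∫ ω, (A ω / eh (X ω, U ω) - 1) * (Y1 ω - μ1 (U ω)) ∂μ = 0 := by
  by_cases hint : Integrable (fun ω => (A ω / eh (X ω, U ω) - 1) * (Y1 ω - μ1 (U ω))) μ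
  swap
  · exact integral_undef hint
  haveI : SigmaFinite (μ.trim hm) := by
    have : IsFiniteMeasure (μ.trim hm) := isFiniteMeasure_trim hm
    infer_instance
  haveI : IsProbabilityMeasure (Measure.map X μ) :=
    Measure.isProbabilityMeasure_map hXmeas.aemeasurable
  haveI : IsProbabilityMeasure (Measure.map U μ) :=
    Measure.isProbabilityMeasure_map hUmeas.aemeasurable
  -- basic facts
  have hXUmeas : Measurable (fun ω => (X ω, U ω)) := hXmeas.prodMk hUmeas
  have hεpos : (0:ℝ) < ε⁻¹ := by positivity
  have heh_pos : ∀ p : ℝ × ℝ, 0 < eh p := fun p =>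
    lt_of_lt_of_le hε (by rcases p with ⟨x, u⟩; exact (heb x u).1)
  have heh_ne : ∀ p : ℝ × ℝ, eh p ≠ 0 := fun p => (heh_pos p).ne'
  have hinv_bdd : ∀ p : ℝ × ℝ, ‖(eh p)⁻¹‖ ≤ ε⁻¹ := by
    intro p
    rw [Real.norm_eq_abs, abs_of_pos (inv_pos.2 (heh_pos p))]
    exact inv_anti₀ hε (by rcases p with ⟨x, u⟩; exact (heb x u).1)
  have hAb : ∀ ω, ‖A ω‖ ≤ 1 := by
    intro ω; rcases hA01 ω with h | h <;> simp [h]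
  have hAint : Integrable A μ :=
    (integrable_const (1:ℝ)).mono' hAmeas.aestronglyMeasurable (ae_of_all _ hAb)
  have hq1meas : Measurable q1 := by
    have : q1 = fun p => prob p / eh p - 1 := funext fun p => by
      rcases p with ⟨x, u⟩; exact hq1 x u
    rw [this]; exact (hpmeas.div hehmeas).sub measurable_const
  -- the weight f(ω) := A ω / eh (X ω, U ω) - 1, bounded by ε⁻¹ + 1
  have hfw_meas : Measurable (fun ω => A ω / eh (X ω, U ω) - 1) :=
    (hAmeas.div (hehmeas.comp hXUmeas)).sub measurable_const
  have hfw_bdd : ∀ ω, ‖A ω / eh (X ω, U ω) - 1‖ ≤ ε⁻¹ + 1 := by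
    intro ω
    have h1 : ‖A ω / eh (X ω, U ω)‖ ≤ ε⁻¹ := by
      rw [div_eq_mul_inv, norm_mul]
      calc ‖A ω‖ * ‖(eh (X ω, U ω))⁻¹‖ ≤ 1 * ε⁻¹ :=
            mul_le_mul (hAb ω) (hinv_bdd _) (norm_nonneg _) zero_le_one
        _ = ε⁻¹ := one_mul _
    calc ‖A ω / eh (X ω, U ω) - 1‖ ≤ ‖A ω / eh (X ω, U ω)‖ + ‖(1:ℝ)‖ := norm_sub_le _ _
      _ ≤ ε⁻¹ + 1 := by rw [norm_one]; linarith
  -- μ1 is measurable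
  have hμ1meas : Measurable μ1 := by
    have hnum : StronglyMeasurable (fun u => ∫ x, q1 (x, u) * mreg (x, u) ∂(Measure.map X μ)) :=
      StronglyMeasurable.integral_prod_left' (f := fun p => q1 p * mreg p)
        (hq1meas.stronglyMeasurable.mul hmmeas.stronglyMeasurable)
    have hden2 : StronglyMeasurable (fun u => ∫ x, q1 (x, u) ∂(Measure.map X μ)) :=
      StronglyMeasurable.integral_prod_left' (f := q1) hq1meas.stronglyMeasurable
    have : μ1 = fun u => (∫ x, q1 (x, u) * mreg (x, u) ∂(Measure.map X μ)) /
        (∫ x, q1 (x, u) ∂(Measure.map X μ)) := funext hμ1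
    rw [this]
    exact hnum.measurable.div hden2.measurable
  -- integrability pieces
  have hw1 : Integrable (fun ω => (A ω / eh (X ω, U ω) - 1) * Y1 ω) μ :=
    hY1int.bdd_mul hfw_meas.aestronglyMeasurable (ae_of_all _ hfw_bdd)
  have hw2 : Integrable (fun ω => (A ω / eh (X ω, U ω) - 1) * μ1 (U ω)) μ :=
    (hw1.sub hint).congr (ae_of_all _ fun ω => by simp only [Pi.sub_apply]; ring)
  -- |A/eh - 1| is bounded below
  have hc : (0:ℝ) < min 1 (ε / (1 - ε)) := by
    refine lt_min one_pos (div_pos hε (by linarith))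
  have hfw_lb : ∀ ω, min 1 (ε / (1 - ε)) ≤ |A ω / eh (X ω, U ω) - 1| := by
    intro ω
    rcases hA01 ω with h | h
    · have h0 : (0:ℝ) / eh (X ω, U ω) - 1 = -1 := by rw [zero_div]; ring
      rw [h, h0, abs_neg, abs_one]; exact min_le_left _ _
    · rw [h]
      have h1 : eh (X ω, U ω) ≤ 1 - ε := (heb (X ω) (U ω)).2
      have h2 : 0 < eh (X ω, U ω) := heh_pos _
      have h3 : (1:ℝ) / (1 - ε) ≤ 1 / eh (X ω, U ω) :=
        one_div_le_one_div_of_le h2 h1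
      have h4 : ε / (1 - ε) ≤ 1 / eh (X ω, U ω) - 1 := by
        have hne : (1:ℝ) - ε ≠ 0 := by linarith
        have heq : (1:ℝ) / (1 - ε) - 1 = ε / (1 - ε) := by
          rw [div_sub_one hne]; ring_nf
        linarith
      have h5 : 0 ≤ 1 / eh (X ω, U ω) - 1 := le_trans (le_of_lt (div_pos hε (by linarith))) h4
      rw [abs_of_nonneg h5]
      exact le_trans (min_le_right _ _) h4
  have hμ1U_int : Integrable (fun ω => μ1 (U ω)) μ := by
    refine Integrable.mono' ((hw2.abs.const_mul (min 1 (ε / (1 - ε)))⁻¹))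
      ((hμ1meas.comp hUmeas).aestronglyMeasurable) (ae_of_all _ fun ω => ?_)
    have hle := mul_le_mul_of_nonneg_right (hfw_lb ω) (abs_nonneg (μ1 (U ω)))
    rw [Real.norm_eq_abs]
    calc |μ1 (U ω)| = (min 1 (ε / (1 - ε)))⁻¹ * (min 1 (ε / (1 - ε)) * |μ1 (U ω)|) := by
          field_simp
      _ ≤ (min 1 (ε / (1 - ε)))⁻¹ * |(A ω / eh (X ω, U ω) - 1) * μ1 (U ω)| := by
          refine mul_le_mul_of_nonneg_left ?_ (le_of_lt (inv_pos.2 hc))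
          rw [abs_mul]; exact hle
  -- conditional expectation of A is in [0,1]
  have hcA0 : 0 ≤ᵐ[μ] μ[A|m'] :=
    condExp_nonneg (ae_of_all _ fun ω => by rcases hA01 ω with h | h <;> simp [h])
  have hcA1 : μ[A|m'] ≤ᵐ[μ] fun _ => (1:ℝ) := by
    have h := condExp_mono (μ := μ) (m := m') hAint (integrable_const (1:ℝ))
      (ae_of_all _ fun ω => by rcases hA01 ω with h | h <;> simp [h])
    calc μ[A|m'] ≤ᵐ[μ] μ[(fun _ => (1:ℝ))|m'] := h
      _ = fun _ => (1:ℝ) := condExp_const hm 1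
  have hprob01 : ∀ᵐ ω ∂μ, (X ω, U ω) ∈ {p : ℝ × ℝ | 0 ≤ prob p ∧ prob p ≤ 1} := by
    filter_upwards [hp, hcA0, hcA1] with ω h1 h2 h3
    simp only [Pi.zero_apply] at h2
    refine ⟨?_, ?_⟩
    · rw [h1]; exact h2
    · rw [h1]; exact h3
  have hsetmeas : MeasurableSet {p : ℝ × ℝ | 0 ≤ prob p ∧ prob p ≤ 1} :=
    (measurableSet_le measurable_const hpmeas).inter (measurableSet_le hpmeas measurable_const)
  have hprod : Measure.map (fun ω => (X ω, U ω)) μ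
      = (Measure.map X μ).prod (Measure.map U μ) :=
    (indepFun_iff_map_prod_eq_prod_map_map hXmeas.aemeasurable hUmeas.aemeasurable).mp hXU
  have hprob01' : ∀ᵐ p ∂((Measure.map X μ).prod (Measure.map U μ)),
      0 ≤ prob p ∧ prob p ≤ 1 := by
    rw [← hprod]
    exact (ae_map_iff hXUmeas.aemeasurable hsetmeas).2 hprob01
  -- q1 is a.e. bounded w.r.t. the product measure
  have hq1bdd : ∀ᵐ p ∂((Measure.map X μ).prod (Measure.map U μ)), ‖q1 p‖ ≤ ε⁻¹ + 1 := by
    filter_upwards [hprob01'] with p hp01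
    obtain ⟨x, u⟩ := p
    rw [hq1 x u]
    have h1 : prob (x, u) / eh (x, u) ≤ 1 / ε :=
      div_le_div₀ zero_le_one hp01.2 hε (heb x u).1
    have h2 : 0 ≤ prob (x, u) / eh (x, u) :=
      div_nonneg hp01.1 (le_of_lt (heh_pos _))
    rw [Real.norm_eq_abs]
    calc |prob (x, u) / eh (x, u) - 1| ≤ |prob (x, u) / eh (x, u)| + |(1:ℝ)| := abs_sub _ _
      _ = prob (x, u) / eh (x, u) + 1 := by rw [abs_of_nonneg h2, abs_one]
      _ ≤ ε⁻¹ + 1 := by rw [← one_div]; linarith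
  -- integrability over the product measure
  have hmregμ : Integrable (fun ω => mreg (X ω, U ω)) μ := integrable_condExp.congr hmr.symm
  have hmregν : Integrable mreg ((Measure.map X μ).prod (Measure.map U μ)) := by
    rw [← hprod]
    exact (integrable_map_measure hmmeas.aestronglyMeasurable hXUmeas.aemeasurable).2 hmregμ
  have hμ1ν : Integrable (fun p : ℝ × ℝ => μ1 p.2)
      ((Measure.map X μ).prod (Measure.map U μ)) := by
    rw [← hprod]
    exact (integrable_map_measure (hμ1meas.comp measurable_snd).aestronglyMeasurable
      hXUmeas.aemeasurable).2 hμ1U_int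
  have v1int : Integrable (fun p => q1 p * mreg p)
      ((Measure.map X μ).prod (Measure.map U μ)) :=
    hmregν.bdd_mul hq1meas.aestronglyMeasurable hq1bdd
  have v2int : Integrable (fun p : ℝ × ℝ => q1 p * μ1 p.2)
      ((Measure.map X μ).prod (Measure.map U μ)) :=
    hμ1ν.bdd_mul hq1meas.aestronglyMeasurable hq1bdd
  -- conditional expectation computations
  have hYA_int : Integrable (fun ω => Y1 ω * A ω) μ :=
    (hY1int.bdd_mul hAmeas.aestronglyMeasurable (ae_of_all _ hAb)).congr
      (ae_of_all _ fun ω => mul_comm _ _)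
  have hinvYA : Integrable (fun ω => (eh (X ω, U ω))⁻¹ * (Y1 ω * A ω)) μ :=
    hYA_int.bdd_mul ((hehmeas.comp hXUmeas).inv).aestronglyMeasurable
      (ae_of_all _ fun ω => hinv_bdd _)
  have prodf := condexp_mul_of_condIndepFun' hm hY1meas hAmeas hY1int hA01 hci
  have e1 : μ[fun ω => (eh (X ω, U ω))⁻¹ * (Y1 ω * A ω)|m']
      =ᵐ[μ] fun ω => (eh (X ω, U ω))⁻¹ * (μ[fun ω => Y1 ω * A ω|m']) ω := by
    have h := condExp_mul_of_stronglyMeasurable_left (μ := μ) (m := m')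
      (hcomp (fun p => (eh p)⁻¹) hehmeas.inv).stronglyMeasurable hinvYA hYA_int
    exact h
  have cexp1 : μ[fun ω => (A ω / eh (X ω, U ω) - 1) * Y1 ω|m']
      =ᵐ[μ] fun ω => q1 (X ω, U ω) * mreg (X ω, U ω) := by
    have hfun : (fun ω => (A ω / eh (X ω, U ω) - 1) * Y1 ω)
        = fun ω => (eh (X ω, U ω))⁻¹ * (Y1 ω * A ω) - Y1 ω := by
      funext ω; rw [div_eq_mul_inv]; ring
    rw [hfun]
    refine (condExp_sub hinvYA hY1int m').trans ?_
    filter_upwards [e1, prodf, hp, hmr] with ω h1 h2 h3 h4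
    simp only [Pi.sub_apply]
    rw [h1, h2, ← h3, ← h4, hq1 (X ω) (U ω), div_eq_mul_inv]
    ring
  have hwA_int : Integrable (fun ω => (μ1 (U ω) * (eh (X ω, U ω))⁻¹) * A ω) μ := by
    have h0 : Integrable (fun ω => (eh (X ω, U ω))⁻¹ * μ1 (U ω)) μ :=
      hμ1U_int.bdd_mul ((hehmeas.comp hXUmeas).inv).aestronglyMeasurable
        (ae_of_all _ fun ω => hinv_bdd _)
    exact (h0.bdd_mul hAmeas.aestronglyMeasurable (ae_of_all _ hAb)).congr
      (ae_of_all _ fun ω => by ring)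
  have e2 : μ[fun ω => (μ1 (U ω) * (eh (X ω, U ω))⁻¹) * A ω|m']
      =ᵐ[μ] fun ω => (μ1 (U ω) * (eh (X ω, U ω))⁻¹) * (μ[A|m']) ω := by
    have h := condExp_mul_of_stronglyMeasurable_left (μ := μ) (m := m')
      (hcomp (fun p => μ1 p.2 * (eh p)⁻¹)
        ((hμ1meas.comp measurable_snd).mul hehmeas.inv)).stronglyMeasurable hwA_int hAint
    exact h
  have e3 : μ[(fun ω => μ1 (U ω))|m'] = fun ω => μ1 (U ω) :=
    condExp_of_stronglyMeasurable hm
      (hcomp (fun p => μ1 p.2) (hμ1meas.comp measurable_snd)).stronglyMeasurable hμ1U_int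
  have cexp2 : μ[fun ω => (A ω / eh (X ω, U ω) - 1) * μ1 (U ω)|m']
      =ᵐ[μ] fun ω => q1 (X ω, U ω) * μ1 (U ω) := by
    have hfun : (fun ω => (A ω / eh (X ω, U ω) - 1) * μ1 (U ω))
        = fun ω => (μ1 (U ω) * (eh (X ω, U ω))⁻¹) * A ω - μ1 (U ω) := by
      funext ω; rw [div_eq_mul_inv]; ring
    rw [hfun]
    refine (condExp_sub hwA_int hμ1U_int m').trans ?_
    rw [e3]
    filter_upwards [e2, hp] with ω h1 h2
    simp only [Pi.sub_apply]
    rw [h1, ← h2, hq1 (X ω) (U ω), div_eq_mul_inv]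
    ring
  -- final assembly
  have hv1meas : AEStronglyMeasurable (fun p => q1 p * mreg p)
      (Measure.map (fun ω => (X ω, U ω)) μ) :=
    (hq1meas.mul hmmeas).aestronglyMeasurable
  have hv2meas : AEStronglyMeasurable (fun p : ℝ × ℝ => q1 p * μ1 p.2)
      (Measure.map (fun ω => (X ω, U ω)) μ) :=
    (hq1meas.mul (hμ1meas.comp measurable_snd)).aestronglyMeasurable
  have hinner : ∀ᵐ u ∂(Measure.map U μ),
      (∫ x, q1 (x, u) ∂(Measure.map X μ)) * μ1 u
        = ∫ x, q1 (x, u) * mreg (x, u) ∂(Measure.map X μ) := by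
    filter_upwards [hden] with u hu
    rw [hμ1 u, mul_comm, div_mul_cancel₀ _ hu]
  calc ∫ ω, (A ω / eh (X ω, U ω) - 1) * (Y1 ω - μ1 (U ω)) ∂μ
      = ∫ ω, ((A ω / eh (X ω, U ω) - 1) * Y1 ω
          - (A ω / eh (X ω, U ω) - 1) * μ1 (U ω)) ∂μ := by
        refine integral_congr_ae (ae_of_all _ fun ω => ?_); ring
    _ = (∫ ω, (A ω / eh (X ω, U ω) - 1) * Y1 ω ∂μ)
        - ∫ ω, (A ω / eh (X ω, U ω) - 1) * μ1 (U ω) ∂μ := integral_sub hw1 hw2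
    _ = (∫ ω, q1 (X ω, U ω) * mreg (X ω, U ω) ∂μ)
        - ∫ ω, q1 (X ω, U ω) * μ1 (U ω) ∂μ := by
        rw [← integral_condExp hm (f := fun ω => (A ω / eh (X ω, U ω) - 1) * Y1 ω),
          ← integral_condExp hm (f := fun ω => (A ω / eh (X ω, U ω) - 1) * μ1 (U ω)),
          integral_congr_ae cexp1, integral_congr_ae cexp2]
    _ = (∫ p, q1 p * mreg p ∂(Measure.map (fun ω => (X ω, U ω)) μ))
        - ∫ p : ℝ × ℝ, q1 p * μ1 p.2 ∂(Measure.map (fun ω => (X ω, U ω)) μ) := by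
        rw [integral_map hXUmeas.aemeasurable hv1meas,
          integral_map hXUmeas.aemeasurable hv2meas]
    _ = (∫ u, ∫ x, q1 (x, u) * mreg (x, u) ∂(Measure.map X μ) ∂(Measure.map U μ))
        - ∫ u, ∫ x, q1 (x, u) * μ1 u ∂(Measure.map X μ) ∂(Measure.map U μ) := by
        rw [hprod, integral_prod_symm _ v1int, integral_prod_symm _ v2int]
    _ = 0 := by
        simp_rw [integral_mul_const]
        rw [integral_congr_ae hinner, sub_self]

/-- with X ⟂ U and Y(1) ⟂ A | (X,U), the weighted residual of
Y(1) around the cluster-level function μ₁(U) has mean zero. -/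
theorem stmt8 {Ω : Type*} [mΩ : MeasurableSpace Ω] [StandardBorelSpace Ω] [Nonempty Ω]
    {μ : Measure Ω} [IsProbabilityMeasure μ]
    (A X U Y1 : Ω → ℝ)
    (eh prob mreg : ℝ × ℝ → ℝ)
    (hAmeas : Measurable A) (hXmeas : Measurable X) (hUmeas : Measurable U)
    (hY1meas : Measurable Y1) (hehmeas : Measurable eh)
    (hpmeas : Measurable prob) (hmmeas : Measurable mreg)
    (hA01 : ∀ ω, A ω = 0 ∨ A ω = 1)
    (hY1int : Integrable Y1 μ)
    (ε : ℝ) (hε : 0 < ε) (hε' : ε < 1/2)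
    (heb : ∀ x u, ε ≤ eh (x, u) ∧ eh (x, u) ≤ 1 - ε)
    (hm : MeasurableSpace.comap (fun ω => (X ω, U ω)) inferInstance ≤ mΩ)
    -- X and U are independent
    (hXU : IndepFun X U μ)
    -- Y(1) ⟂ A | (X,U)
    (hci : CondIndepFun (MeasurableSpace.comap (fun ω => (X ω, U ω)) inferInstance)
      hm Y1 A μ)
    -- prob(x,u) is a version of E[A | X, U]
    (hp : (fun ω => prob (X ω, U ω)) =ᵐ[μ]
      μ[A | MeasurableSpace.comap (fun ω => (X ω, U ω)) inferInstance])
    -- mreg(x,u) is a version of E[Y(1) | X, U]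
    (hmr : (fun ω => mreg (X ω, U ω)) =ᵐ[μ]
      μ[Y1 | MeasurableSpace.comap (fun ω => (X ω, U ω)) inferInstance])
    (q1 : ℝ × ℝ → ℝ)
    (hq1 : ∀ x u, q1 (x, u) = prob (x, u) / eh (x, u) - 1)
    (μ1 : ℝ → ℝ)
    (hμ1 : ∀ u, μ1 u =
      (∫ x, q1 (x, u) * mreg (x, u) ∂(Measure.map X μ)) /
      (∫ x, q1 (x, u) ∂(Measure.map X μ)))
    -- the denominator is nonzero for almost all u
    (hden : ∀ᵐ u ∂(Measure.map U μ), (∫ x, q1 (x, u) ∂(Measure.map X μ)) ≠ 0) :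
    ∫ ω, (A ω / eh (X ω, U ω) - 1) * (Y1 ω - μ1 (U ω)) ∂μ = 0 := by
  refine stmt8_aux A X U Y1 eh prob mreg hAmeas hXmeas hUmeas hY1meas hehmeas hpmeas
    hmmeas hA01 hY1int ε hε hε' heb hm ?_ hXU hci hp hmr q1 hq1 μ1 hμ1 hden
  intro v hv
  exact hv.comp (measurable_iff_comap_le.2 le_rfl)
end

section
/- Suppose for all clusters i the constraints Σ_j ω_{ij} A_{ij}/ê_{ij} = Σ_j ω_{ij} and Σ_j ω_{ij}(1−A_{ij})/(1−ê_{ij}) = Σ_j ω_{ij} hold. Then the IPTW estimator admits the decomposition N̂(τ̂_cal − τ̄) = Σ_{i,j} ω_{ij}(A_{ij}/ê_{ij} − 1)(Y_{ij}(1) − μ₁(i)) − Σ_{i,j} ω_{ij}((1−A_{ij})/(1−ê_{ij}) − 1)(Y_{ij}(0) − μ₀(i)) for any cluster-level functions μ₀, μ₁: {1,…,K} → ℝ, where τ̄ = N̂^{-1} Σ_{i,j} ω_{ij}(Y_{ij}(1) − Y_{ij}(0)) and Y_{ij} = A_{ij}Y_{ij}(1) + (1−A_{ij})Y_{ij}(0).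 -/
/-- under per-cluster calibration constraints, the IPTW estimator admits
the residual decomposition around arbitrary cluster-level functions μ₀, μ₁. -/
theorem stmt14 (K : ℕ) (n : Fin K → ℕ)
    (w : (i : Fin K) → Fin (n i) → ℝ)
    (A : (i : Fin K) → Fin (n i) → ℝ)
    (ehat : (i : Fin K) → Fin (n i) → ℝ)
    (Y0 Y1 : (i : Fin K) → Fin (n i) → ℝ)
    (hw : ∀ i j, 0 < w i j)
    (hA : ∀ i j, A i j = 0 ∨ A i j = 1)
    (he : ∀ i j, 0 < ehat i j ∧ ehat i j < 1)
    (hc1 : ∀ i, ∑ j, w i j * A i j / ehat i j = ∑ j, w i j)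
    (hc2 : ∀ i, ∑ j, w i j * (1 - A i j) / (1 - ehat i j) = ∑ j, w i j)
    (Y : (i : Fin K) → Fin (n i) → ℝ)
    (hY : ∀ i j, Y i j = A i j * Y1 i j + (1 - A i j) * Y0 i j)
    (Nhat : ℝ) (hN : Nhat = ∑ i, ∑ j, w i j)
    (τcal : ℝ)
    (hτcal : τcal = Nhat⁻¹ * ∑ i, ∑ j, w i j *
      (A i j * Y i j / ehat i j - (1 - A i j) * Y i j / (1 - ehat i j)))
    (τbar : ℝ)
    (hτbar : τbar = Nhat⁻¹ * ∑ i, ∑ j, w i j * (Y1 i j - Y0 i j))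
    (μ₀ μ₁ : Fin K → ℝ) :
    Nhat * (τcal - τbar)
      = (∑ i, ∑ j, w i j * (A i j / ehat i j - 1) * (Y1 i j - μ₁ i))
        - (∑ i, ∑ j, w i j * ((1 - A i j) / (1 - ehat i j) - 1) * (Y0 i j - μ₀ i)) := by
  subst hτcal hτbar hN
  by_cases hNz : (∑ i, ∑ j, w i j) = (0 : ℝ)
  · -- degenerate case: all clusters empty
    have h0 : ∀ i, IsEmpty (Fin (n i)) := by
      intro i
      by_contra h
      rw [not_isEmpty_iff] at h
      obtain ⟨j⟩ := h
      have hin : ∑ j, w i j = 0 :=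
        (Finset.sum_eq_zero_iff_of_nonneg
          (fun i _ => Finset.sum_nonneg fun j _ => (hw i j).le)).mp hNz i (Finset.mem_univ i)
      have hpos : (0:ℝ) < ∑ j, w i j :=
        Finset.sum_pos (fun j _ => hw i j) ⟨j, Finset.mem_univ j⟩
      linarith
    have hzero : ∀ (f : (i : Fin K) → Fin (n i) → ℝ), ∑ i, ∑ j, f i j = 0 := by
      intro f
      refine Finset.sum_eq_zero fun i _ => Finset.sum_eq_zero fun j _ => ?_
      exact ((h0 i).false j).elim
    simp only [hNz, hzero]
    ring
  · rw [mul_sub, ← mul_assoc, mul_inv_cancel₀ hNz, one_mul, ← mul_assoc,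
      mul_inv_cancel₀ hNz, one_mul, ← Finset.sum_sub_distrib, ← Finset.sum_sub_distrib]
    refine Finset.sum_congr rfl fun i _ => ?_
    have hz1 : ∑ j, (w i j * A i j / ehat i j - w i j) = 0 := by
      rw [Finset.sum_sub_distrib, hc1 i, sub_self]
    have hz2 : ∑ j, (w i j * (1 - A i j) / (1 - ehat i j) - w i j) = 0 := by
      rw [Finset.sum_sub_distrib, hc2 i, sub_self]
    have hr1 : ∑ j, w i j * (A i j / ehat i j - 1) * (Y1 i j - μ₁ i)
        = ∑ j, w i j * (A i j / ehat i j - 1) * Y1 i j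
          - (∑ j, (w i j * A i j / ehat i j - w i j)) * μ₁ i := by
      rw [Finset.sum_mul, ← Finset.sum_sub_distrib]
      exact Finset.sum_congr rfl fun j _ => by ring
    have hr2 : ∑ j, w i j * ((1 - A i j) / (1 - ehat i j) - 1) * (Y0 i j - μ₀ i)
        = ∑ j, w i j * ((1 - A i j) / (1 - ehat i j) - 1) * Y0 i j
          - (∑ j, (w i j * (1 - A i j) / (1 - ehat i j) - w i j)) * μ₀ i := by
      rw [Finset.sum_mul, ← Finset.sum_sub_distrib]
      exact Finset.sum_congr rfl fun j _ => by ring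
    rw [hr1, hr2, hz1, hz2, zero_mul, zero_mul, sub_zero, sub_zero,
      ← Finset.sum_sub_distrib, ← Finset.sum_sub_distrib]
    refine Finset.sum_congr rfl fun j _ => ?_
    rw [hY i j]
    rcases hA i j with h | h <;> rw [h] <;> ring
end
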